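/- Let B3 be the presented group with generators σ1, σ2 and relation σ1σ2σ1 = σ2σ1σ2 (the braid group on 3 strands). The group homomorphism g : B3 → PSL(2,ℤ) determined by g(σ1) = [A] and g(σ2) = [B], where A = !![1,1; 0,1] and B = !![1,0; -1,1], is well defined and surjective, and its kernel equals the center of B3. -/

import Mathlib

/-- `SL(2,ℤ)`: 2×2 integer matrices of determinant 1. -/
abbrev SL2Z := Matrix.SpecialLinearGroup (Fin 2) ℤ

/-- The matrix `A = !![1,1; 0,1]` as an element of `SL(2,ℤ)`. -/
def MA : SL2Z := ⟨!![1, 1; 0, 1], by norm_num [Matrix.det_fin_two_of]⟩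

/-- The matrix `B = !![1,0; -1,1]` as an element of `SL(2,ℤ)`. -/
def MB : SL2Z := ⟨!![1, 0; -1, 1], by norm_num [Matrix.det_fin_two_of]⟩

/-- `PSL(2,ℤ)`: the quotient of `SL(2,ℤ)` by its center `{±1}`. -/
abbrev PSL2Z := SL2Z ⧸ Subgroup.center SL2Z

/-- Relation for the braid group on 3 strands `B3 = ⟨σ1, σ2 | σ1σ2σ1 = σ2σ1σ2⟩`,
with `σ1` corresponding to `0` and `σ2` to `1`. -/
def b3Rels : Set (FreeGroup (Fin 2)) :=
  { FreeGroup.of 0 * FreeGroup.of 1 * FreeGroup.of 0 *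
      (FreeGroup.of 1 * FreeGroup.of 0 * FreeGroup.of 1)⁻¹ }

/-- The braid group on 3 strands, presented as `⟨σ1, σ2 | σ1σ2σ1 = σ2σ1σ2⟩`. -/
abbrev B3 := PresentedGroup b3Rels

/-- The generator `σ1` of `B3`. -/
def b3s1 : B3 := PresentedGroup.of 0

/-- The generator `σ2` of `B3`. -/
def b3s2 : B3 := PresentedGroup.of 1

namespace Stmt5Aux

open Matrix

def Irr : Type := {x : ℝ // Irrational x}

noncomputable def mob (M : SL2Z) (x : ℝ) : ℝ :=
  ((M.1 0 0 : ℝ) * x + (M.1 0 1 : ℝ)) / ((M.1 1 0 : ℝ) * x + (M.1 1 1 : ℝ))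

lemma det1 (M : SL2Z) : (M.1 0 0 : ℝ) * M.1 1 1 - M.1 0 1 * M.1 1 0 = 1 := by
  have h := M.2
  rw [Matrix.det_fin_two] at h
  exact_mod_cast congrArg (fun z : ℤ => (z : ℝ)) h

lemma denom_ne (M : SL2Z) {x : ℝ} (hx : Irrational x) :
    (M.1 1 0 : ℝ) * x + (M.1 1 1 : ℝ) ≠ 0 := by
  rcases eq_or_ne (M.1 1 0) 0 with h | h
  · have hdet := det1 M
    rw [h] at hdet ⊢
    push_cast
    intro h0
    simp only [zero_mul, zero_add] at h0
    rw [h0] at hdet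
    push_cast at hdet
    simp at hdet
  · intro h0
    apply hx
    refine ⟨(-(M.1 1 1) : ℚ) / (M.1 1 0 : ℚ), ?_⟩
    have hc : (M.1 1 0 : ℝ) ≠ 0 := Int.cast_ne_zero.mpr h
    push_cast
    field_simp
    linarith [h0]

lemma mob_irrational (M : SL2Z) {x : ℝ} (hx : Irrational x) : Irrational (mob M x) := by
  rintro ⟨q, hq⟩
  have hd := denom_ne M hx
  have h1 : (q : ℝ) * ((M.1 1 0 : ℝ) * x + M.1 1 1) = (M.1 0 0 : ℝ) * x + M.1 0 1 := by
    rw [hq, mob]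
    field_simp
    rw [mul_div_assoc, div_self, mul_one]; intro h; apply hd; linarith
  rcases eq_or_ne ((M.1 0 0 : ℝ) - q * M.1 1 0) 0 with h2 | h2
  · have hdet := det1 M
    have ha : (M.1 0 0 : ℝ) = q * M.1 1 0 := by linarith
    have hb : (M.1 0 1 : ℝ) = q * M.1 1 1 := by
      have := h1
      rw [ha] at this
      nlinarith [this]
    rw [ha, hb] at hdet
    nlinarith [hdet]
  · apply hx
    refine ⟨((q : ℚ) * (M.1 1 1 : ℚ) - (M.1 0 1 : ℚ)) / ((M.1 0 0 : ℚ) - q * (M.1 1 0 : ℚ)), ?_⟩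
    push_cast
    rw [div_eq_iff h2]
    nlinarith [h1]


noncomputable instance : MulAction SL2Z Irr where
  smul M x := ⟨mob M x.1, mob_irrational M x.2⟩
  one_smul x := by
    apply Subtype.ext
    show mob 1 x.1 = x.1
    rw [mob]
    simp [Matrix.SpecialLinearGroup.coe_one, Matrix.one_apply]
  mul_smul M N x := by
    apply Subtype.ext
    show mob (M * N) x.1 = mob M (mob N x.1)
    have hq : (N.1 1 0 : ℝ) * x.1 + N.1 1 1 ≠ 0 := denom_ne N x.2
    have hq2 : (M.1 1 0 : ℝ) * mob N x.1 + M.1 1 1 ≠ 0 := denom_ne M (mob_irrational N x.2)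
    set P : ℝ := (N.1 0 0 : ℝ) * x.1 + N.1 0 1 with hP
    set Q : ℝ := (N.1 1 0 : ℝ) * x.1 + N.1 1 1 with hQ
    have hmobN : mob N x.1 = P / Q := rfl
    rw [hmobN] at hq2 ⊢
    have n1 : (M.1 0 0 : ℝ) * (P / Q) + M.1 0 1 = ((M.1 0 0 : ℝ) * P + M.1 0 1 * Q) / Q := by
      field_simp
    have n2 : (M.1 1 0 : ℝ) * (P / Q) + M.1 1 1 = ((M.1 1 0 : ℝ) * P + M.1 1 1 * Q) / Q := by
      field_simp
    have hmul : (M * N).1 = M.1 * N.1 := rfl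
    have e00 : ((M * N).1 0 0 : ℝ) = M.1 0 0 * N.1 0 0 + M.1 0 1 * N.1 1 0 := by
      rw [hmul, Matrix.mul_apply, Fin.sum_univ_two]; push_cast; ring
    have e01 : ((M * N).1 0 1 : ℝ) = M.1 0 0 * N.1 0 1 + M.1 0 1 * N.1 1 1 := by
      rw [hmul, Matrix.mul_apply, Fin.sum_univ_two]; push_cast; ring
    have e10 : ((M * N).1 1 0 : ℝ) = M.1 1 0 * N.1 0 0 + M.1 1 1 * N.1 1 0 := by
      rw [hmul, Matrix.mul_apply, Fin.sum_univ_two]; push_cast; ring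
    have e11 : ((M * N).1 1 1 : ℝ) = M.1 1 0 * N.1 0 1 + M.1 1 1 * N.1 1 1 := by
      rw [hmul, Matrix.mul_apply, Fin.sum_univ_two]; push_cast; ring
    have hNum : (((M * N).1 0 0 : ℝ) * x.1 + (M * N).1 0 1) = (M.1 0 0 : ℝ) * P + M.1 0 1 * Q := by
      rw [e00, e01, hP, hQ]; ring
    have hD : (((M * N).1 1 0 : ℝ) * x.1 + (M * N).1 1 1) = (M.1 1 0 : ℝ) * P + M.1 1 1 * Q := by
      rw [e10, e11, hP, hQ]; ring
    show (((M * N).1 0 0 : ℝ) * x.1 + (M * N).1 0 1) / (((M * N).1 1 0 : ℝ) * x.1 + (M * N).1 1 1)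
        = ((M.1 0 0 : ℝ) * (P / Q) + M.1 0 1) / ((M.1 1 0 : ℝ) * (P / Q) + M.1 1 1)
    rw [hNum, hD, n1, n2, div_div_div_cancel_right₀ hq]

lemma smul_val (M : SL2Z) (x : Irr) : (M • x).1 = mob M x.1 := rfl

noncomputable def rho : SL2Z →* Equiv.Perm Irr := MulAction.toPermHom SL2Z Irr

lemma center_le_ker_rho : Subgroup.center SL2Z ≤ rho.ker := by
  intro z hz
  obtain ⟨r, hr2, hrz⟩ := Matrix.SpecialLinearGroup.mem_center_iff.mp hz
  have hrr : r * r = 1 := by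
    have h := hr2
    rw [Fintype.card_fin, pow_two] at h
    exact h
  have hrcases : r = 1 ∨ r = -1 := by
    rcases Int.eq_one_or_neg_one_of_mul_eq_one' hrr with h | h
    · exact Or.inl h.1
    · exact Or.inr h.1
  have hz00 : z.1 0 0 = r := by
    rw [← hrz, Matrix.scalar_apply, Matrix.diagonal_apply_eq]
  have hz01 : z.1 0 1 = 0 := by
    rw [← hrz, Matrix.scalar_apply, Matrix.diagonal_apply_ne _ (by decide)]
  have hz10 : z.1 1 0 = 0 := by
    rw [← hrz, Matrix.scalar_apply, Matrix.diagonal_apply_ne _ (by decide)]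
  have hz11 : z.1 1 1 = r := by
    rw [← hrz, Matrix.scalar_apply, Matrix.diagonal_apply_eq]
  rw [MonoidHom.mem_ker]
  apply Equiv.ext
  intro x
  show z • x = x
  apply Subtype.ext
  show mob z x.1 = x.1
  have hr0 : (r : ℝ) ≠ 0 := by rcases hrcases with h | h <;> simp [h]
  rw [mob, hz00, hz01, hz10, hz11]
  push_cast
  rw [zero_mul, add_zero, zero_add]
  exact mul_div_cancel_left₀ x.1 hr0




noncomputable def rhoBar : PSL2Z →* Equiv.Perm Irr :=
  QuotientGroup.lift (Subgroup.center SL2Z) rho center_le_ker_rho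

noncomputable instance : MulAction PSL2Z Irr := MulAction.compHom Irr rhoBar

lemma mk_smul_val (M : SL2Z) (x : Irr) :
    ((QuotientGroup.mk M : PSL2Z) • x).1
      = ((M.1 0 0 : ℝ) * x.1 + M.1 0 1) / ((M.1 1 0 : ℝ) * x.1 + M.1 1 1) := rfl


lemma coe_mul2 (A B : SL2Z) : (A * B).1 = A.1 * B.1 := rfl

lemma coe_sq (A : SL2Z) : (A ^ 2).1 = A.1 * A.1 := by rw [pow_two]; rfl

lemma coeMA : MA.1 = !![1, 1; 0, 1] := rfl
lemma coeMB : MB.1 = !![1, 0; -1, 1] := rfl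

lemma coeAB : (MA * MB).1 = !![0, 1; -1, 1] := by
  rw [coe_mul2, coeMA, coeMB, Matrix.mul_fin_two]; norm_num

lemma coeABA : (MA * MB * MA).1 = !![0, 1; -1, 0] := by
  rw [coe_mul2, coeAB, coeMA, Matrix.mul_fin_two]; norm_num

lemma coeBAB : (MB * MA * MB).1 = !![0, 1; -1, 0] := by
  rw [coe_mul2, coe_mul2, coeMA, coeMB, Matrix.mul_fin_two, Matrix.mul_fin_two]; norm_num

lemma coeABsq : ((MA * MB) ^ 2).1 = !![-1, 1; -1, 0] := by
  rw [coe_sq, coeAB, Matrix.mul_fin_two]; norm_num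

lemma coeABcube : ((MA * MB) ^ 3).1 = !![-1, 0; 0, -1] := by
  have : (MA * MB) ^ 3 = (MA * MB) ^ 2 * (MA * MB) := by rw [pow_succ]
  rw [this, coe_mul2, coeABsq, coeAB, Matrix.mul_fin_two]; norm_num

lemma coeABAsq : ((MA * MB * MA) ^ 2).1 = !![-1, 0; 0, -1] := by
  rw [coe_sq, coeABA, Matrix.mul_fin_two]; norm_num

lemma negI_mem_center {Z : SL2Z} (hZ : Z.1 = !![-1, 0; 0, -1]) :
    Z ∈ Subgroup.center SL2Z := by
  rw [Matrix.SpecialLinearGroup.mem_center_iff]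
  refine ⟨-1, by norm_num, ?_⟩
  rw [hZ]
  ext i j
  rw [Matrix.scalar_apply]
  fin_cases i <;> fin_cases j <;>
    simp [Matrix.diagonal_apply]

lemma diag_mem_center {Z : SL2Z} {r : ℤ} (h00 : Z.1 0 0 = r) (h01 : Z.1 0 1 = 0)
    (h10 : Z.1 1 0 = 0) (h11 : Z.1 1 1 = r) : Z ∈ Subgroup.center SL2Z := by
  have hdet := Z.2
  rw [Matrix.det_fin_two, h00, h01, h10, h11] at hdet
  rw [Matrix.SpecialLinearGroup.mem_center_iff]
  refine ⟨r, by rw [Fintype.card_fin, pow_two]; linarith, ?_⟩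
  ext i j
  rw [Matrix.scalar_apply]
  fin_cases i <;> fin_cases j <;>
    simp [Matrix.diagonal_apply, h00, h01, h10, h11]

def aP : PSL2Z := QuotientGroup.mk (MA * MB * MA)
def bP : PSL2Z := QuotientGroup.mk (MA * MB)

lemma aP_sq : aP ^ 2 = 1 := by
  rw [aP, ← QuotientGroup.mk_pow, QuotientGroup.eq_one_iff]
  exact negI_mem_center coeABAsq

lemma bP_cube : bP ^ 3 = 1 := by
  rw [bP, ← QuotientGroup.mk_pow, QuotientGroup.eq_one_iff]
  exact negI_mem_center coeABcube


lemma pow_mod_eq {G : Type*} [Group G] {g : G} {n : ℕ} (h : g ^ n = 1) (m : ℕ) :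
    g ^ (m % n) = g ^ m := by
  conv_rhs => rw [← Nat.div_add_mod m n]
  rw [pow_add, pow_mul, h, one_pow, one_mul]

def cyc {G : Type*} [Group G] (n : ℕ) [NeZero n] (g : G) (h : g ^ n = 1) :
    Multiplicative (ZMod n) →* G where
  toFun x := g ^ (x.toAdd.val)
  map_one' := by
    show g ^ ((0 : ZMod n)).val = 1
    rw [ZMod.val_zero, pow_zero]
  map_mul' x y := by
    show g ^ ((x.toAdd + y.toAdd).val) = g ^ x.toAdd.val * g ^ y.toAdd.val
    rw [ZMod.val_add, pow_mod_eq h, pow_add]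

lemma cyc_apply {G : Type*} [Group G] (n : ℕ) [NeZero n] (g : G) (h : g ^ n = 1)
    (x : Multiplicative (ZMod n)) : cyc n g h x = g ^ (x.toAdd.val) := rfl

lemma cyc_ext {G : Type*} [Group G] {n : ℕ} [NeZero n]
    (f1 f2 : Multiplicative (ZMod n) →* G)
    (h : f1 (Multiplicative.ofAdd 1) = f2 (Multiplicative.ofAdd 1)) : f1 = f2 := by
  apply MonoidHom.ext; intro x
  have hx : x = (Multiplicative.ofAdd (1 : ZMod n)) ^ (x.toAdd.val) := by
    rw [← ofAdd_nsmul]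
    rw [nsmul_eq_mul, mul_one]
    rw [ZMod.natCast_rightInverse x.toAdd]
    rfl
  rw [hx, map_pow, map_pow, h]

def Hfam : Fin 2 → Type := fun i => Multiplicative (ZMod (i.val + 2))

instance (i : Fin 2) : Group (Hfam i) := by unfold Hfam; infer_instance

instance (i : Fin 2) : NeZero (i.val + 2) := ⟨by omega⟩

def gens : Fin 2 → PSL2Z := fun i => if i = 0 then aP else bP

lemma gens_pow (i : Fin 2) : gens i ^ (i.val + 2) = 1 := by
  fin_cases i
  · exact aP_sq
  · exact bP_cube

def fPSL : ∀ i : Fin 2, Hfam i →* PSL2Z := fun i => cyc (i.val + 2) (gens i) (gens_pow i)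


open Pointwise in
lemma smulset_test : True := trivial

def Xpp : Fin 2 → Set Irr := fun i => if i = 0 then {x | x.1 < 0} else {x | 0 < x.1}

lemma mem_Xpp0 (x : Irr) : x ∈ Xpp 0 ↔ x.1 < 0 := by simp [Xpp]

lemma mem_Xpp1 (x : Irr) : x ∈ Xpp 1 ↔ 0 < x.1 := by simp [Xpp]

lemma smul_val_of_coe {M : SL2Z} {m : Matrix (Fin 2) (Fin 2) ℤ} (hM : M.1 = m) (x : Irr) :
    ((QuotientGroup.mk M : PSL2Z) • x).1
      = ((m 0 0 : ℝ) * x.1 + m 0 1) / ((m 1 0 : ℝ) * x.1 + m 1 1) := by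
  rw [mk_smul_val, hM]

lemma aP_smul_neg {x : Irr} (hx : 0 < x.1) : (aP • x).1 < 0 := by
  rw [aP, smul_val_of_coe coeABA]
  norm_num
  positivity

lemma bP_smul_pos {x : Irr} (hx : x.1 < 0) : 0 < (bP • x).1 := by
  rw [bP, smul_val_of_coe coeAB]
  norm_num
  linarith

lemma bP2_smul_pos {x : Irr} (hx : x.1 < 0) : 0 < ((bP ^ 2) • x).1 := by
  rw [bP, ← QuotientGroup.mk_pow, smul_val_of_coe coeABsq]
  norm_num
  apply div_pos <;> linarith

lemma hXne : ∀ i, (Xpp i).Nonempty := by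
  intro i
  fin_cases i
  · exact ⟨⟨-Real.sqrt 2, irrational_sqrt_two.neg⟩, (mem_Xpp0 _).mpr (by
      simp only [neg_lt, neg_zero]
      exact Real.sqrt_pos.mpr (by norm_num))⟩
  · exact ⟨⟨Real.sqrt 2, irrational_sqrt_two⟩, (mem_Xpp1 _).mpr
      (Real.sqrt_pos.mpr (by norm_num))⟩

lemma disjoint01 : Disjoint (Xpp 0) (Xpp 1) :=
  Set.disjoint_left.mpr fun x hx hx' =>
    absurd ((mem_Xpp0 x).mp hx) (not_lt.mpr (le_of_lt ((mem_Xpp1 x).mp hx')))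

lemma hXdisj : Pairwise (Function.onFun Disjoint Xpp) := by
  intro i j hij
  fin_cases i <;> fin_cases j <;>
    first
      | exact absurd rfl hij
      | exact disjoint01
      | exact disjoint01.symm

open Pointwise in
lemma main01 : ∀ h : Multiplicative (ZMod 2), h ≠ 1 → (fPSL 0 h) • Xpp 1 ⊆ Xpp 0 := by
  intro h hne
  have hv2 : (Multiplicative.toAdd h).val < 2 := ZMod.val_lt _
  have hv0 : (Multiplicative.toAdd h).val ≠ 0 := by
    intro h0
    have h00 : Multiplicative.toAdd h = 0 := by rwa [ZMod.val_eq_zero] at h0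
    exact hne (by rw [← ofAdd_toAdd h, h00]; rfl)
  have hv : (Multiplicative.toAdd h).val = 1 := by omega
  rintro y ⟨x, hx, rfl⟩
  have hx' := (mem_Xpp1 x).mp hx
  refine (mem_Xpp0 _).mpr ?_
  have hfp : fPSL 0 h = aP := by
    show gens 0 ^ (Multiplicative.toAdd h).val = aP
    rw [hv, pow_one]
    simp [gens]
  rw [hfp]
  exact aP_smul_neg hx'

open Pointwise in
lemma main10 : ∀ h : Multiplicative (ZMod 3), h ≠ 1 → (fPSL 1 h) • Xpp 0 ⊆ Xpp 1 := by
  intro h hne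
  have hv3 : (Multiplicative.toAdd h).val < 3 := ZMod.val_lt _
  have hv0 : (Multiplicative.toAdd h).val ≠ 0 := by
    intro h0
    have h00 : Multiplicative.toAdd h = 0 := by rwa [ZMod.val_eq_zero] at h0
    exact hne (by rw [← ofAdd_toAdd h, h00]; rfl)
  rintro y ⟨x, hx, rfl⟩
  have hx' := (mem_Xpp0 x).mp hx
  refine (mem_Xpp1 _).mpr ?_
  have hfp : fPSL 1 h = bP ^ (Multiplicative.toAdd h).val := by
    show gens 1 ^ (Multiplicative.toAdd h).val = bP ^ (Multiplicative.toAdd h).val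
    simp [gens]
  rw [hfp]
  rcases (by omega : (Multiplicative.toAdd h).val = 1 ∨ (Multiplicative.toAdd h).val = 2)
    with hv | hv
  · rw [hv, pow_one]
    exact bP_smul_pos hx'
  · rw [hv]
    exact bP2_smul_pos hx'

open Pointwise in
lemma hpp : Pairwise fun i j => ∀ h : Hfam i, h ≠ 1 → fPSL i h • Xpp j ⊆ Xpp i := by
  intro i j hij
  fin_cases i <;> fin_cases j <;>
    first
      | exact absurd rfl hij
      | exact main01
      | exact main10

lemma hcard : (3 : Cardinal) ≤ Cardinal.mk (Fin 2) ∨ ∃ i, (3 : Cardinal) ≤ Cardinal.mk (Hfam i) := by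
  right
  refine ⟨1, ?_⟩
  rw [show Hfam 1 = Multiplicative (ZMod 3) from rfl, Cardinal.mk_fintype,
    Fintype.card_multiplicative, ZMod.card]
  norm_num

noncomputable def phiP : Monoid.CoprodI Hfam →* PSL2Z := Monoid.CoprodI.lift fPSL

lemma phiP_injective : Function.Injective phiP :=
  Monoid.CoprodI.lift_injective_of_ping_pong fPSL hcard Xpp hXne hXdisj hpp


lemma relation_holds : MA * MB * MA = MB * MA * MB := Subtype.ext (by rw [coeABA, coeBAB])

def fgen : Fin 2 → PSL2Z := fun i =>
  if i = 0 then (QuotientGroup.mk MA : PSL2Z) else (QuotientGroup.mk MB : PSL2Z)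

lemma hrels : ∀ r ∈ b3Rels, FreeGroup.lift fgen r = 1 := by
  intro r hr
  rw [b3Rels, Set.mem_singleton_iff] at hr
  subst hr
  simp only [_root_.map_mul, _root_.map_inv, FreeGroup.lift_apply_of]
  rw [mul_inv_eq_one]
  show fgen 0 * fgen 1 * fgen 0 = fgen 1 * fgen 0 * fgen 1
  have f0 : fgen 0 = (QuotientGroup.mk MA : PSL2Z) := if_pos rfl
  have f1 : fgen 1 = (QuotientGroup.mk MB : PSL2Z) := if_neg (by decide)
  rw [f0, f1]
  rw [← QuotientGroup.mk_mul, ← QuotientGroup.mk_mul, ← QuotientGroup.mk_mul,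
    ← QuotientGroup.mk_mul, relation_holds]

def gHom : B3 →* PSL2Z := PresentedGroup.toGroup hrels

lemma gHom_s1 : gHom b3s1 = (QuotientGroup.mk MA : PSL2Z) := by
  rw [b3s1, gHom, PresentedGroup.toGroup.of]
  simp [fgen]

lemma gHom_s2 : gHom b3s2 = (QuotientGroup.mk MB : PSL2Z) := by
  rw [b3s2, gHom, PresentedGroup.toGroup.of]
  simp [fgen]

lemma braid : b3s1 * b3s2 * b3s1 = b3s2 * b3s1 * b3s2 := by
  have h : ((QuotientGroup.mk (FreeGroup.of 0 * FreeGroup.of 1 * FreeGroup.of 0 *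
      (FreeGroup.of 1 * FreeGroup.of 0 * FreeGroup.of 1)⁻¹) : B3)) = 1 := by
    rw [QuotientGroup.eq_one_iff]
    exact Subgroup.subset_normalClosure rfl
  rw [QuotientGroup.mk_mul, QuotientGroup.mk_inv, QuotientGroup.mk_mul, QuotientGroup.mk_mul,
    QuotientGroup.mk_mul, mul_inv_eq_one] at h
  exact h

def b3x : B3 := b3s1 * b3s2 * b3s1

def b3c : B3 := b3x ^ 2

lemma xs1 : b3x * b3s1 = b3s2 * b3x := by
  rw [b3x]
  nth_rewrite 1 [braid]
  group

lemma xs2 : b3x * b3s2 = b3s1 * b3x := by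
  rw [b3x]
  nth_rewrite 2 [braid]
  group

lemma c_comm_s1 : b3c * b3s1 = b3s1 * b3c := by
  rw [b3c, pow_two, mul_assoc, xs1, ← mul_assoc, xs2, mul_assoc]

lemma c_comm_s2 : b3c * b3s2 = b3s2 * b3c := by
  rw [b3c, pow_two, mul_assoc, xs2, ← mul_assoc, xs1, mul_assoc]

lemma c_central : b3c ∈ Subgroup.center B3 := by
  rw [Subgroup.mem_center_iff]
  intro w
  have hw := PresentedGroup.generated_by b3Rels (Subgroup.centralizer {b3c}) (by
    intro j
    fin_cases j
    · rw [Subgroup.mem_centralizer_iff]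
      intro y hy
      rw [Set.mem_singleton_iff] at hy
      subst hy
      exact c_comm_s1
    · rw [Subgroup.mem_centralizer_iff]
      intro y hy
      rw [Set.mem_singleton_iff] at hy
      subst hy
      exact c_comm_s2) w
  rw [Subgroup.mem_centralizer_iff] at hw
  exact (hw b3c (Set.mem_singleton _)).symm

lemma gHom_x : gHom b3x = (QuotientGroup.mk (MA * MB * MA) : PSL2Z) := by
  rw [b3x, _root_.map_mul, _root_.map_mul, gHom_s1, gHom_s2, ← QuotientGroup.mk_mul, ← QuotientGroup.mk_mul]

lemma gHom_c_one : gHom b3c = 1 := by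
  rw [b3c, map_pow, gHom_x, ← QuotientGroup.mk_pow, QuotientGroup.eq_one_iff]
  exact negI_mem_center coeABAsq

instance : (Subgroup.zpowers b3c).Normal := by
  constructor
  intro n hn w
  have hcen : n ∈ Subgroup.center B3 := (Subgroup.zpowers_le.mpr c_central) hn
  have : w * n = n * w := Subgroup.mem_center_iff.mp hcen w
  rw [this, mul_assoc, mul_inv_cancel, mul_one]
  exact hn

abbrev Qgrp := B3 ⧸ Subgroup.zpowers b3c

def gBar : Qgrp →* PSL2Z :=
  QuotientGroup.lift (Subgroup.zpowers b3c) gHom (by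
    intro z hz
    obtain ⟨k, hk⟩ := Subgroup.mem_zpowers_iff.mp hz
    rw [MonoidHom.mem_ker, ← hk, map_zpow, gHom_c_one, _root_.one_zpow])

lemma gBar_mk (w : B3) : gBar (QuotientGroup.mk w) = gHom w := rfl

def xQ : Qgrp := QuotientGroup.mk b3x

def yQ : Qgrp := QuotientGroup.mk (b3s1 * b3s2)

lemma xQ_sq : xQ ^ 2 = 1 := by
  rw [xQ, ← QuotientGroup.mk_pow, QuotientGroup.eq_one_iff]
  exact Subgroup.mem_zpowers_iff.mpr ⟨1, by rw [zpow_one, b3c]⟩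

lemma y3 : (b3s1 * b3s2) ^ 3 = b3c := by
  rw [b3c, pow_two, b3x]
  nth_rewrite 2 [braid]
  rw [pow_succ, pow_succ, pow_one]
  simp only [mul_assoc]

lemma yQ_cube : yQ ^ 3 = 1 := by
  rw [yQ, ← QuotientGroup.mk_pow, QuotientGroup.eq_one_iff, y3]
  exact Subgroup.mem_zpowers_iff.mpr ⟨1, by rw [zpow_one]⟩

def gensQ : Fin 2 → Qgrp := fun i => if i = 0 then xQ else yQ

lemma gensQ_pow (i : Fin 2) : gensQ i ^ (i.val + 2) = 1 := by
  fin_cases i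
  · exact xQ_sq
  · exact yQ_cube

def fQ : ∀ i : Fin 2, Hfam i →* Qgrp := fun i => cyc (i.val + 2) (gensQ i) (gensQ_pow i)

noncomputable def psiQ : Monoid.CoprodI Hfam →* Qgrp := Monoid.CoprodI.lift fQ


lemma val_one_eq (n : ℕ) (hn : 1 < n) : (1 : ZMod n).val = 1 := by
  haveI : NeZero n := ⟨by omega⟩
  haveI : Fact (1 < n) := ⟨hn⟩
  exact ZMod.val_one n

lemma cyc_one {G : Type*} [Group G] (n : ℕ) [NeZero n] (g : G) (h : g ^ n = 1) (hn : 1 < n) :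
    cyc n g h (Multiplicative.ofAdd 1) = g := by
  rw [cyc_apply]
  have h1 : (Multiplicative.toAdd (Multiplicative.ofAdd (1 : ZMod n))) = 1 := rfl
  rw [h1, val_one_eq n hn, pow_one]

lemma gBar_gensQ (i : Fin 2) : gBar (gensQ i) = gens i := by
  fin_cases i
  · show gBar (gensQ 0) = gens 0
    have h0 : gensQ 0 = xQ := if_pos rfl
    have g0 : gens 0 = aP := if_pos rfl
    rw [h0, g0, xQ, gBar_mk, gHom_x]
    rfl
  · show gBar (gensQ 1) = gens 1
    have h1 : gensQ 1 = yQ := if_neg (by decide)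
    have g1 : gens 1 = bP := if_neg (by decide)
    rw [h1, g1, yQ, gBar_mk, _root_.map_mul, gHom_s1, gHom_s2, ← QuotientGroup.mk_mul]
    rfl

lemma comp_eq : gBar.comp psiQ = phiP := by
  apply Monoid.CoprodI.ext_hom
  intro i
  have h1lt : 1 < i.val + 2 := by omega
  refine cyc_ext _ _ ?_
  show gBar (psiQ (Monoid.CoprodI.of (i := i) (Multiplicative.ofAdd (1 : ZMod (i.val + 2)))))
      = phiP (Monoid.CoprodI.of (i := i) (Multiplicative.ofAdd (1 : ZMod (i.val + 2))))
  rw [psiQ, phiP]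
  erw [Monoid.CoprodI.lift_of, Monoid.CoprodI.lift_of]
  show gBar (cyc (i.val + 2) (gensQ i) (gensQ_pow i) (Multiplicative.ofAdd 1))
      = cyc (i.val + 2) (gens i) (gens_pow i) (Multiplicative.ofAdd 1)
  rw [cyc_one _ _ _ h1lt, cyc_one _ _ _ h1lt]
  exact gBar_gensQ i

lemma xQ_mem : xQ ∈ psiQ.range := by
  refine ⟨Monoid.CoprodI.of (i := 0) (Multiplicative.ofAdd 1), ?_⟩
  rw [psiQ]
  erw [Monoid.CoprodI.lift_of]
  show cyc ((0 : Fin 2).val + 2) (gensQ 0) (gensQ_pow 0) (Multiplicative.ofAdd 1) = xQ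
  rw [cyc_one _ _ _ (by omega)]
  exact if_pos rfl

lemma yQ_mem : yQ ∈ psiQ.range := by
  refine ⟨Monoid.CoprodI.of (i := 1) (Multiplicative.ofAdd 1), ?_⟩
  rw [psiQ]
  erw [Monoid.CoprodI.lift_of]
  show cyc ((1 : Fin 2).val + 2) (gensQ 1) (gensQ_pow 1) (Multiplicative.ofAdd 1) = yQ
  rw [cyc_one _ _ _ (by omega)]
  exact if_neg (by decide)

lemma mk_s1 : (QuotientGroup.mk b3s1 : Qgrp) = yQ⁻¹ * xQ := by
  rw [xQ, yQ, ← QuotientGroup.mk_inv, ← QuotientGroup.mk_mul]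
  congr 1
  rw [b3x]
  group

lemma mk_s2 : (QuotientGroup.mk b3s2 : Qgrp) = xQ⁻¹ * (yQ * yQ) := by
  rw [xQ, yQ, ← QuotientGroup.mk_inv, ← QuotientGroup.mk_mul, ← QuotientGroup.mk_mul]
  congr 1
  rw [b3x]
  group

lemma psiQ_surj : Function.Surjective psiQ := by
  intro q
  induction q using QuotientGroup.induction_on with
  | _ w =>
    have hw := PresentedGroup.generated_by b3Rels
      (Subgroup.comap (QuotientGroup.mk' (Subgroup.zpowers b3c)) psiQ.range) (by
        intro j
        fin_cases j
        · show (QuotientGroup.mk b3s1 : Qgrp) ∈ psiQ.range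
          rw [mk_s1]
          exact mul_mem (inv_mem yQ_mem) xQ_mem
        · show (QuotientGroup.mk b3s2 : Qgrp) ∈ psiQ.range
          rw [mk_s2]
          exact mul_mem (inv_mem xQ_mem) (mul_mem yQ_mem yQ_mem)) w
    obtain ⟨v, hv⟩ := Subgroup.mem_comap.mp hw
    exact ⟨v, hv⟩

lemma gBar_inj : Function.Injective gBar := by
  refine (injective_iff_map_eq_one gBar).mpr ?_
  intro q hq
  obtain ⟨v, rfl⟩ := psiQ_surj q
  have hphi : phiP v = 1 := by
    rw [← comp_eq, MonoidHom.comp_apply]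
    exact hq
  have hv : v = 1 := phiP_injective (by rw [hphi, _root_.map_one])
  rw [hv, _root_.map_one]

lemma ker_le_center : gHom.ker ≤ Subgroup.center B3 := by
  intro w hw
  rw [MonoidHom.mem_ker] at hw
  have h1 : (QuotientGroup.mk w : Qgrp) = 1 := gBar_inj (by rw [gBar_mk, hw, _root_.map_one])
  rw [QuotientGroup.eq_one_iff] at h1
  exact (Subgroup.zpowers_le.mpr c_central) h1


lemma T_eq : ModularGroup.T = MA := Subtype.ext (by rw [ModularGroup.coe_T, coeMA])

lemma mk_mem_closure (M : SL2Z) :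
    (QuotientGroup.mk M : PSL2Z) ∈
      Subgroup.closure {(QuotientGroup.mk MA : PSL2Z), (QuotientGroup.mk MB : PSL2Z)} := by
  set K := Subgroup.closure
    {(QuotientGroup.mk MA : PSL2Z), (QuotientGroup.mk MB : PSL2Z)} with hK
  have hA : (QuotientGroup.mk MA : PSL2Z) ∈ K := Subgroup.subset_closure (Or.inl rfl)
  have hB : (QuotientGroup.mk MB : PSL2Z) ∈ K := Subgroup.subset_closure (Or.inr rfl)
  have hS : (QuotientGroup.mk (MA * MB * MA) : PSL2Z) ∈ K := by
    rw [QuotientGroup.mk_mul, QuotientGroup.mk_mul]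
    exact mul_mem (mul_mem hA hB) hA
  have hT : ∀ k : ℤ, (QuotientGroup.mk (ModularGroup.T ^ k) : PSL2Z) ∈ K := fun k => by
    rw [QuotientGroup.mk_zpow, T_eq]
    exact zpow_mem hA k
  have base : ∀ M : SL2Z, M.1 1 0 = 0 → (QuotientGroup.mk M : PSL2Z) ∈ K := by
    intro M h0
    have hdet := M.2
    rw [Matrix.det_fin_two, h0] at hdet
    have had : M.1 0 0 * M.1 1 1 = 1 := by
      rw [mul_zero, sub_zero] at hdet
      exact hdet
    rcases Int.eq_one_or_neg_one_of_mul_eq_one' had with ⟨ha, hd⟩ | ⟨ha, hd⟩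
    · have hM : M = ModularGroup.T ^ (M.1 0 1) := by
        apply Subtype.ext
        rw [ModularGroup.coe_T_zpow]
        ext i j
        fin_cases i <;> fin_cases j <;> simp [ha, hd, h0]
      rw [hM]
      exact hT _
    · have hM : M = ModularGroup.T ^ (-(M.1 0 1)) * (MA * MB * MA) ^ 2 := by
        apply Subtype.ext
        rw [coe_mul2, ModularGroup.coe_T_zpow, coeABAsq, Matrix.mul_fin_two]
        ext i j
        fin_cases i <;> fin_cases j <;> simp [ha, hd, h0]
      rw [hM, QuotientGroup.mk_mul, QuotientGroup.mk_pow]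
      exact mul_mem (hT _) (pow_mem hS 2)
  suffices hind : ∀ n : ℕ, ∀ M : SL2Z, (M.1 1 0).natAbs ≤ n →
      (QuotientGroup.mk M : PSL2Z) ∈ K by exact hind _ M le_rfl
  intro n
  induction n with
  | zero =>
    intro M hM
    exact base M (by omega)
  | succ n ih =>
    intro M hM
    rcases eq_or_ne (M.1 1 0) 0 with h0 | h0
    · exact base M h0
    · set k : ℤ := -(M.1 0 0 / M.1 1 0) with hk
      set M' : SL2Z := (MA * MB * MA) * (ModularGroup.T ^ k * M) with hM'
      have hc' : M'.1 1 0 = -(M.1 0 0 % M.1 1 0) := by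
        have e1 : M'.1 = (MA * MB * MA).1 * ((ModularGroup.T ^ k).1 * M.1) := rfl
        rw [e1, coeABA, ModularGroup.coe_T_zpow]
        rw [Matrix.mul_apply, Fin.sum_univ_two, Matrix.mul_apply, Fin.sum_univ_two,
          Matrix.mul_apply, Fin.sum_univ_two]
        simp
        rw [Int.emod_def]
        ring
      have hlt : (M'.1 1 0).natAbs ≤ n := by
        rw [hc']
        have h1 := Int.emod_nonneg (M.1 0 0) h0
        have h2 := Int.emod_lt (M.1 0 0) h0
        omega
      have hmem := ih M' hlt
      have hMeq : M = (ModularGroup.T ^ k)⁻¹ * ((MA * MB * MA)⁻¹ * M') := by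
        rw [hM']
        group
      rw [hMeq, QuotientGroup.mk_mul, QuotientGroup.mk_mul, QuotientGroup.mk_inv,
        QuotientGroup.mk_inv]
      exact mul_mem (inv_mem (hT k)) (mul_mem (inv_mem hS) hmem)

lemma gHom_surj : Function.Surjective gHom := by
  intro p
  induction p using QuotientGroup.induction_on with
  | _ M =>
    have h := mk_mem_closure M
    have hle : Subgroup.closure {(QuotientGroup.mk MA : PSL2Z), (QuotientGroup.mk MB : PSL2Z)}
        ≤ gHom.range := by
      rw [Subgroup.closure_le]
      rintro p (rfl | rfl)
      · exact ⟨b3s1, gHom_s1⟩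
      · exact ⟨b3s2, gHom_s2⟩
    obtain ⟨w, hw⟩ := hle h
    exact ⟨w, hw⟩

lemma comm_of_mk_comm {M N : SL2Z} (htr : Matrix.trace N.1 = 2)
    (h : (QuotientGroup.mk (M * N) : PSL2Z) = QuotientGroup.mk (N * M)) :
    N * M = M * N := by
  have hZA : (M * N)⁻¹ * (N * M) ∈ Subgroup.center SL2Z := by
    rw [← QuotientGroup.eq_one_iff, QuotientGroup.mk_mul, QuotientGroup.mk_inv, h,
      inv_mul_cancel]
  set Z : SL2Z := (M * N)⁻¹ * (N * M) with hZdef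
  have hNM : N * M = (M * N) * Z := by
    rw [hZdef]
    group
  obtain ⟨r, hr2, hrZ⟩ := Matrix.SpecialLinearGroup.mem_center_iff.mp hZA
  have hZcoe : Z.1 = !![r, 0; 0, r] := by
    rw [← hrZ]
    ext i j
    rw [Matrix.scalar_apply]
    fin_cases i <;> fin_cases j <;> simp [Matrix.diagonal_apply]
  have hconj : M⁻¹ * N * M = N * Z := by
    rw [mul_assoc, hNM]
    group
  -- trace argument
  have hMinv : M.1 * (M⁻¹).1 = 1 := by
    have h2 : (M * M⁻¹).1 = (1 : SL2Z).1 := by rw [mul_inv_cancel]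
    rwa [coe_mul2] at h2
  have htr1 : Matrix.trace ((M⁻¹ * N * M).1) = 2 := by
    have e1 : (M⁻¹ * N * M).1 = (M⁻¹).1 * N.1 * M.1 := rfl
    rw [e1, Matrix.trace_mul_comm, ← Matrix.mul_assoc, hMinv, Matrix.one_mul, htr]
  have htr2 : Matrix.trace ((N * Z).1) = 2 * r := by
    rw [coe_mul2, hZcoe, Matrix.trace_fin_two, Matrix.mul_apply, Fin.sum_univ_two,
      Matrix.mul_apply, Fin.sum_univ_two]
    rw [Matrix.trace_fin_two] at htr
    simp
    linear_combination r * htr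
  rw [hconj] at htr1
  rw [htr1] at htr2
  have hr1 : r = 1 := by linarith
  have hZ1 : Z = 1 := by
    apply Subtype.ext
    rw [hZcoe, hr1]
    ext i j
    fin_cases i <;> fin_cases j <;> simp [Matrix.one_apply]
  rw [hNM, hZ1, mul_one]

lemma center_le_ker : Subgroup.center B3 ≤ gHom.ker := by
  intro z hz
  rw [MonoidHom.mem_ker]
  have hcomm : ∀ p : PSL2Z, gHom z * p = p * gHom z := by
    intro p
    obtain ⟨w, rfl⟩ := gHom_surj p
    rw [← _root_.map_mul, ← _root_.map_mul, Subgroup.mem_center_iff.mp hz w]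
  obtain ⟨M, hM⟩ := QuotientGroup.mk_surjective (gHom z)
  have hA := hcomm (QuotientGroup.mk MA)
  have hB := hcomm (QuotientGroup.mk MB)
  rw [← hM, ← QuotientGroup.mk_mul, ← QuotientGroup.mk_mul] at hA hB
  have hcA : MA * M = M * MA := comm_of_mk_comm (by rw [coeMA, Matrix.trace_fin_two]; norm_num) hA
  have hcB : MB * M = M * MB := comm_of_mk_comm (by rw [coeMB, Matrix.trace_fin_two]; norm_num) hB
  have hcA' : MA.1 * M.1 = M.1 * MA.1 := by
    have := congrArg (fun X : SL2Z => X.1) hcA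
    simpa [coe_mul2] using this
  have hcB' : MB.1 * M.1 = M.1 * MB.1 := by
    have := congrArg (fun X : SL2Z => X.1) hcB
    simpa [coe_mul2] using this
  have e10 : M.1 1 0 = 0 := by
    have h00 := congrFun (congrFun hcA' 0) 0
    rw [Matrix.mul_apply, Fin.sum_univ_two, Matrix.mul_apply, Fin.sum_univ_two, coeMA] at h00
    simp at h00
    linarith
  have e11 : M.1 1 1 = M.1 0 0 := by
    have h01 := congrFun (congrFun hcA' 0) 1
    rw [Matrix.mul_apply, Fin.sum_univ_two, Matrix.mul_apply, Fin.sum_univ_two, coeMA] at h01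
    simp at h01
    linarith
  have e01 : M.1 0 1 = 0 := by
    have h00 := congrFun (congrFun hcB' 0) 0
    rw [Matrix.mul_apply, Fin.sum_univ_two, Matrix.mul_apply, Fin.sum_univ_two, coeMB] at h00
    simp at h00
    linarith
  have hMc : M ∈ Subgroup.center SL2Z := diag_mem_center rfl e01 e10 e11
  rw [← hM, QuotientGroup.eq_one_iff]
  exact hMc

theorem main :
    ∃ g : B3 →* PSL2Z,
      g b3s1 = (QuotientGroup.mk MA : PSL2Z) ∧
      g b3s2 = (QuotientGroup.mk MB : PSL2Z) ∧
      Function.Surjective g ∧ g.ker = Subgroup.center B3 :=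
  ⟨gHom, gHom_s1, gHom_s2, gHom_surj, le_antisymm ker_le_center center_le_ker⟩

end Stmt5Aux

theorem stmt5 :
    ∃ g : B3 →* PSL2Z,
      g b3s1 = (QuotientGroup.mk MA : PSL2Z) ∧
      g b3s2 = (QuotientGroup.mk MB : PSL2Z) ∧
      Function.Surjective g ∧ g.ker = Subgroup.center B3 :=
  Stmt5Aux.main
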